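/- For any real numbers a and c with c > 0, min over x ∈ R of [c(x + a)² + |x|] equals 2c·H(a, 1/(2c)) where H is the Huber loss H(x,y) = x²/2 for |x| ≤ y and y(|x| − y/2) otherwise. -/
import Mathlib


open Real

/-- The Huber loss with threshold `y`. -/
noncomputable def huber (x y : ℝ) : ℝ := if |x| ≤ y then x^2/2 else y*(|x| - y/2)

/-- `min_x [c(x + a)² + |x|] = 2c·H(a, 1/(2c))` for `c > 0`. -/
theorem stmt17 (a c : ℝ) (hc : 0 < c) :
    IsLeast ((fun x => c*(x + a)^2 + |x|) '' Set.univ) (2*c*huber a (1/(2*c))) := by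
  unfold huber
  constructor
  · by_cases h : |a| ≤ 1/(2*c)
    · refine ⟨0, Set.mem_univ _, ?_⟩
      simp only [if_pos h, abs_zero]
      ring
    · rcases le_or_gt 0 a with ha | ha
      · refine ⟨-a + 1/(2*c), Set.mem_univ _, ?_⟩
        simp only [if_neg h]
        push_neg at h
        rw [abs_of_nonpos (by rw [abs_of_nonneg ha] at h; linarith),
          abs_of_nonneg ha]
        field_simp
        ring
      · refine ⟨-a - 1/(2*c), Set.mem_univ _, ?_⟩
        simp only [if_neg h]
        push_neg at h
        have h' : 1/(2*c) < -a := by rwa [abs_of_neg ha] at h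
        rw [abs_of_nonneg (by linarith), abs_of_neg ha]
        field_simp
        ring
  · rintro y ⟨x, -, rfl⟩
    simp only
    by_cases h : |a| ≤ 1/(2*c)
    · rw [if_pos h]
      have h2 : 2*c*|a| ≤ 1 := by
        rw [le_div_iff₀ (by positivity)] at h; linarith
      nlinarith [sq_nonneg x, abs_mul a x, abs_nonneg x, abs_nonneg a,
        mul_le_mul_of_nonneg_right h2 (abs_nonneg x),
        mul_le_mul_of_nonneg_left (neg_abs_le (a*x)) (by linarith : (0:ℝ) ≤ 2*c)]
    · rw [if_neg h]
      push_neg at h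
      have hL : 2*c*(1/(2*c)*(|a| - 1/(2*c)/2)) = |a| - 1/(4*c) := by
        field_simp; ring
      rw [hL]
      have hc4 : 4*c*(1/(4*c)) = 1 := by field_simp
      rcases abs_cases a with ⟨ha, ha'⟩ | ⟨ha, ha'⟩ <;> rw [ha] <;>
        [nlinarith [hc4, sq_nonneg (2*c*(x+a)-1), hc,
           mul_le_mul_of_nonneg_left (neg_abs_le x) hc.le];
         nlinarith [hc4, sq_nonneg (2*c*(x+a)+1), hc,
           mul_le_mul_of_nonneg_left (le_abs_self x) hc.le]]
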